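/- In the basis setting for the new conventional 3-threshold scheme, let β ∈ K, z ∈ K, c ∈ F and s ∈ F. Then the number of pairs (a₀, a₁) ∈ K × K satisfying both a₀ + a₁·β + (π(a₁) + s)·β² = z and π(a₁) + s = c equals |K| / |F|. In particular this count does not depend on the secret s, so one ordinary share together with the special share a₂ reveals no information about the secret. -/
import Mathlib

theorem aux_card_fiber {F K : Type*} [Field F] [Field K] [Algebra F K] [Finite K]
    (π : K →ₗ[F] F) (hπ1 : π 1 = 1) (t : F) :
    Nat.card {x : K // π x = t} = Nat.card K / Nat.card F := by
  have hsurj : Function.Surjective π := by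
    intro f
    exact ⟨f • (1 : K), by simp [hπ1]⟩
  -- translate fiber to kernel
  have hfiber : Nat.card {x : K // π x = t} = Nat.card (LinearMap.ker π) := by
    obtain ⟨x₀, hx₀⟩ := hsurj t
    refine Nat.card_congr ⟨fun x => ⟨x.1 - x₀, ?_⟩, fun y => ⟨y.1 + x₀, ?_⟩, ?_, ?_⟩
    · simp [LinearMap.mem_ker, x.2, hx₀]
    · have := y.2
      simp [LinearMap.mem_ker] at this
      simp [this, hx₀]
    · intro x; ext; simp
    · intro y; ext; simp
  rw [hfiber]
  -- |K| = |ker| * |F|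
  have hF : Finite F := Finite.of_injective _ (algebraMap F K).injective
  have hquot : Nat.card (K ⧸ LinearMap.ker π) = Nat.card F :=
    Nat.card_congr (π.quotKerEquivOfSurjective hsurj).toEquiv
  have hmul : Nat.card K = Nat.card (K ⧸ LinearMap.ker π) * Nat.card (LinearMap.ker π) :=
    by rw [Submodule.card_eq_card_quotient_mul_card (LinearMap.ker π)]; ring
  rw [hmul, hquot, Nat.mul_div_cancel_left _ Nat.card_pos]

/-- In the basis setting, the number of randomness pairs `(a₀, a₁)` producing a
given ordinary share `z` at `β` together with a given special share value
`a₂ = π a₁ + s = c` equals `|K| / |F|`, independently of the secret `s`. -/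
theorem stmt_8 {F K : Type*} [Field F] [Field K] [Algebra F K] [CharP K 2] [Finite K]
    (π : K →ₗ[F] F) (hπ1 : π 1 = 1)
    (β : K) (z : K) (c : F) (s : F) :
    Nat.card {p : K × K //
        p.1 + p.2 * β + algebraMap F K (π p.2 + s) * β ^ 2 = z ∧
        π p.2 + s = c} = Nat.card K / Nat.card F := by
  have e : {p : K × K //
        p.1 + p.2 * β + algebraMap F K (π p.2 + s) * β ^ 2 = z ∧
        π p.2 + s = c} ≃ {x : K // π x = c - s} := by
    refine ⟨fun p => ⟨p.1.2, by have := p.2.2; linear_combination this⟩,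
      fun x => ⟨(z - x.1 * β - algebraMap F K c * β ^ 2, x.1), ?_, ?_⟩, ?_, ?_⟩
    · have hx := x.2
      have h : π x.1 + s = c := by linear_combination hx
      rw [h]; ring
    · have hx := x.2
      linear_combination hx
    · rintro ⟨⟨a₀, a₁⟩, h1, h2⟩
      ext
      · simp only
        rw [h2] at h1
        linear_combination -h1
      · rfl
    · rintro ⟨x, hx⟩; rfl
  rw [Nat.card_congr e, aux_card_fiber π hπ1]
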